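/- arXiv:1307.6393 — 2 statements merged into one kernel-verified Lean document; each statement's English description precedes it below -/
import Mathlib

section
/- Let u be a strongly degenerate diffusion coefficient on [0,L]. Then for all pairs (y,z) ∈ H_u^2(0,L) × H_u^1(0,L) one has the integration-by-parts formula ∫_0^L (u y_x)_x z dx = − ∫_0^L u y_x z_x dx. -/
open MeasureTheory Set Filter

noncomputable section

/-- `g ∈ L²(0,L)`. -/
def MemL2I (L : ℝ) (g : ℝ → ℝ) : Prop :=
  MemLp g 2 (volume.restrict (Ioo 0 L))

/-- `y` is absolutely continuous on `[a,b]` (with derivative `deriv y`). -/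
def ACon (a b : ℝ) (y : ℝ → ℝ) : Prop :=
  IntegrableOn (deriv y) (Icc a b) ∧
  ∀ x ∈ Icc a b, y x = y a + ∫ t in a..x, deriv y t

/-- `y` is locally absolutely continuous on `[0,L] \ {x₀}`. -/
def LocAC (L x₀ : ℝ) (y : ℝ → ℝ) : Prop :=
  ∀ a b : ℝ, a ≤ b → Icc a b ⊆ Icc 0 L \ {x₀} → ACon a b y

/-- `u ∈ W^{1,∞}(0,L)`, i.e. `u` is Lipschitz on `[0,L]`. -/
def MemW1inf (L : ℝ) (u : ℝ → ℝ) : Prop :=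
  ∃ C : NNReal, LipschitzOnWith C u (Icc 0 L)

/-- `u` is a strongly degenerate diffusion coefficient on `[0,L]`. -/
structure StrongDeg (L x₀ : ℝ) (u : ℝ → ℝ) : Prop where
  mem : x₀ ∈ Ioo 0 L
  lip : MemW1inf L u
  zero : u x₀ = 0
  pos : ∀ x ∈ Icc 0 L, x ≠ x₀ → 0 < u x
  oneDivNotInt : ¬ IntegrableOn (fun x => 1 / u x) (Ioo 0 L)

/-- membership in the weighted space `H_u^1(0,L)` (Dirichlet at both ends). -/
def MemH1u (L x₀ : ℝ) (u y : ℝ → ℝ) : Prop :=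
  MemL2I L y ∧ LocAC L x₀ y ∧
  MemL2I L (fun x => Real.sqrt (u x) * deriv y x) ∧ y 0 = 0 ∧ y L = 0

/-- membership in the weighted space `Ĥ_u^1(0,L)` (Dirichlet at `0` only). -/
def MemH1uMixed (L x₀ : ℝ) (u y : ℝ → ℝ) : Prop :=
  MemL2I L y ∧ LocAC L x₀ y ∧
  MemL2I L (fun x => Real.sqrt (u x) * deriv y x) ∧ y 0 = 0

/-- membership in the standard space `H₀¹(0,L)`. -/
def MemH01 (L : ℝ) (y : ℝ → ℝ) : Prop :=
  MemL2I L y ∧ ACon 0 L y ∧ MemL2I L (deriv y) ∧ y 0 = 0 ∧ y L = 0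

/-- the squared norm of `H_u^1(0,L)`: `‖y‖² = ‖y‖_{L²}² + ‖√u y_x‖_{L²}²`. -/
def H1normSq (L : ℝ) (u y : ℝ → ℝ) : ℝ :=
  (∫ x in Ioo 0 L, (y x) ^ 2) + ∫ x in Ioo 0 L, u x * (deriv y x) ^ 2

/-- membership in `H_u^2(0,L) = {y ∈ H_u^1 : u y_x ∈ H¹(0,L)}`. -/
def MemH2u (L x₀ : ℝ) (u y : ℝ → ℝ) : Prop :=
  MemH1u L x₀ u y ∧
  MemL2I L (fun x => u x * deriv y x) ∧
  MemL2I L (deriv (fun x => u x * deriv y x)) ∧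
  ACon 0 L (fun x => u x * deriv y x)

/-- squared dual norm of a functional `F` on the space `{ψ : V ψ}` with the
`H_u^1`-type norm of weight `a`. -/
def dualNormSq (L : ℝ) (V : (ℝ → ℝ) → Prop) (a : ℝ → ℝ) (F : (ℝ → ℝ) → ℝ) : ℝ :=
  sSup {c : ℝ | ∃ ψ : ℝ → ℝ, V ψ ∧ H1normSq L a ψ ≤ 1 ∧ c = (F ψ) ^ 2}

/-- the dual-space-valued source associated with a function `f ∈ L²(Q)`. -/
def Ffun (L : ℝ) (f : ℝ → ℝ → ℝ) : ℝ → (ℝ → ℝ) → ℝ :=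
  fun t ψ => ∫ x in Ioo 0 L, f t x * ψ x

/-- `y`, with distributional time derivative `yt` (a family of functionals on the
test space `{ψ : V ψ}`), is a weak (variational) solution of
`y_t - (a y_x)_x = F`, `y(0,⋅) = y₀`, with the boundary conditions encoded in `V`:
`y ∈ C([0,T];L²) ∩ L²(0,T;V) ∩ W^{1,2}([0,T];V')` and the variational identity holds. -/
structure IsWeakSol (T L : ℝ) (V : (ℝ → ℝ) → Prop) (a : ℝ → ℝ)
    (F : ℝ → (ℝ → ℝ) → ℝ) (y₀ : ℝ → ℝ) (y : ℝ → ℝ → ℝ)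
    (yt : ℝ → (ℝ → ℝ) → ℝ) : Prop where
  init : ∀ᵐ x ∂(volume.restrict (Ioo 0 L)), y 0 x = y₀ x
  memL2 : ∀ t ∈ Icc 0 T, MemL2I L (y t)
  contL2 : ∀ t₀ ∈ Icc 0 T,
    Tendsto (fun t => ∫ x in Ioo 0 L, (y t x - y t₀ x) ^ 2)
      (nhdsWithin t₀ (Icc 0 T)) (nhds 0)
  memV : ∀ᵐ t ∂(volume.restrict (Ioo 0 T)), V (y t)
  normInt : IntegrableOn (fun t => H1normSq L a (y t)) (Ioo 0 T)
  ytLin : ∀ t : ℝ, ∀ ψ φ : ℝ → ℝ, ∀ c : ℝ,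
    yt t (fun x => ψ x + c * φ x) = yt t ψ + c * yt t φ
  ytDualInt : IntegrableOn (fun t => dualNormSq L V a (yt t)) (Ioo 0 T)
  prim : ∀ ψ : ℝ → ℝ, V ψ → ∀ t ∈ Icc 0 T,
    (∫ x in Ioo 0 L, y t x * ψ x)
      = (∫ x in Ioo 0 L, y₀ x * ψ x) + ∫ s in Ioo 0 t, yt s ψ
  eqn : ∀ ψ : ℝ → ℝ, V ψ → ∀ᵐ t ∂(volume.restrict (Ioo 0 T)),
    yt t ψ + (∫ x in Ioo 0 L, a x * deriv (y t) x * deriv ψ x) = F t ψ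

/-- the standing hypotheses on the data `x₀, u_∞, u_m, u_M, α, u₀, u_L`
defining the admissible class `U`. -/
structure AdmissibleSetup (L x₀ uinf : ℝ) (um uM alf : ℝ → ℝ) (u0 uL : ℝ) : Prop where
  hL : 0 < L
  hx : x₀ ∈ Ioo 0 L
  hinf : 0 ≤ uinf
  cum : ContinuousOn um (Icc 0 L)
  cuM : ContinuousOn uM (Icc 0 L)
  calf : ContinuousOn alf (Icc 0 L)
  half1 : ∀ x ∈ Icc 0 L, 1 ≤ alf x
  hcomp : ∀ x ∈ Icc 0 L, uM x ≤ alf x * um x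
  horder : ∀ x ∈ Icc 0 L, x ≠ x₀ → 0 < um x ∧ um x < uM x
  hzm : um x₀ = 0
  hzM : uM x₀ = 0
  hdiv : ¬ IntegrableOn (fun x => 1 / uM x) (Ioo 0 L)
  hu0 : um 0 ≤ u0 ∧ u0 ≤ uM 0
  huL : um L ≤ uL ∧ uL ≤ uM L

/-- membership in the admissible class
`U = {u ∈ W^{1,∞} : u_m ≤ u ≤ u_M, u(0)=u₀, u(L)=u_L, |u_x| ≤ u_∞ a.e.}`. -/
def MemU (L uinf : ℝ) (um uM : ℝ → ℝ) (u0 uL : ℝ) (u : ℝ → ℝ) : Prop :=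
  LipschitzOnWith (Real.toNNReal uinf) u (Icc 0 L) ∧
  (∀ x ∈ Icc 0 L, um x ≤ u x ∧ u x ≤ uM x) ∧ u 0 = u0 ∧ u L = uL

/-- membership in the approximating admissible class
`U_ε = {u ∈ W^{1,∞} : u_m+ε ≤ u ≤ u_M+2ε, u(0)=u₀^ε, u(L)=u_L^ε, |u_x| ≤ u_∞ a.e.}`. -/
def MemUeps (L uinf eps : ℝ) (um uM : ℝ → ℝ) (u0e uLe : ℝ) (u : ℝ → ℝ) : Prop :=
  LipschitzOnWith (Real.toNNReal uinf) u (Icc 0 L) ∧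
  (∀ x ∈ Icc 0 L, um x + eps ≤ u x ∧ u x ≤ uM x + 2 * eps) ∧ u 0 = u0e ∧ u L = uLe

/-- sup norm of `g` on `[0,L]`. -/
def supOn (L : ℝ) (g : ℝ → ℝ) : ℝ :=
  sSup ((fun x => |g x|) '' Icc 0 L)

/-- the cost functional `J`. -/
def costJ (T L lam1 lam2 lam3 Mf MT M : ℝ) (u : ℝ → ℝ) (y : ℝ → ℝ → ℝ) : ℝ :=
  lam1 / 2 * ((∫ t in Ioo 0 T, ∫ x in Ioo 0 L, u x * deriv (y t) x) - Mf) ^ 2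
  + lam2 / 2 * ((∫ x in Ioo 0 L, y T x) - MT) ^ 2
  + lam3 / 2 * ((∫ t in Ioo 0 T, ∫ x in Ioo 0 L, y t x) - M) ^ 2

/-- `(ustar, ystar)` (with time-derivative functional `ytstar`) is a solution of the
minimization problem `(P)` (homogeneous Dirichlet b.c.). -/
def SolvesP (T L x₀ uinf : ℝ) (um uM : ℝ → ℝ) (u0 uL lam1 lam2 lam3 Mf MT M : ℝ)
    (f : ℝ → ℝ → ℝ) (y₀ : ℝ → ℝ) (ustar : ℝ → ℝ) (ystar : ℝ → ℝ → ℝ)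
    (ytstar : ℝ → (ℝ → ℝ) → ℝ) : Prop :=
  MemU L uinf um uM u0 uL ustar ∧
  IsWeakSol T L (MemH1u L x₀ ustar) ustar (Ffun L f) y₀ ystar ytstar ∧
  ∀ (u : ℝ → ℝ) (y : ℝ → ℝ → ℝ) (yt : ℝ → (ℝ → ℝ) → ℝ),
    MemU L uinf um uM u0 uL u →
    IsWeakSol T L (MemH1u L x₀ u) u (Ffun L f) y₀ y yt →
    costJ T L lam1 lam2 lam3 Mf MT M ustar ystar ≤ costJ T L lam1 lam2 lam3 Mf MT M u y

/-- `(ustar, ystar)` is a solution of the approximating problem `(P_ε)`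
(nondegenerate state system). -/
def SolvesPeps (T L uinf eps : ℝ) (um uM : ℝ → ℝ) (u0e uLe lam1 lam2 lam3 Mf MT M : ℝ)
    (f : ℝ → ℝ → ℝ) (y₀ : ℝ → ℝ) (ustar : ℝ → ℝ) (ystar : ℝ → ℝ → ℝ)
    (ytstar : ℝ → (ℝ → ℝ) → ℝ) : Prop :=
  MemUeps L uinf eps um uM u0e uLe ustar ∧
  IsWeakSol T L (MemH01 L) ustar (Ffun L f) y₀ ystar ytstar ∧
  ∀ (u : ℝ → ℝ) (y : ℝ → ℝ → ℝ) (yt : ℝ → (ℝ → ℝ) → ℝ),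
    MemUeps L uinf eps um uM u0e uLe u →
    IsWeakSol T L (MemH01 L) u (Ffun L f) y₀ y yt →
    costJ T L lam1 lam2 lam3 Mf MT M ustar ystar ≤ costJ T L lam1 lam2 lam3 Mf MT M u y

/-- `(ustar, ystar)` is a solution of the final-time minimization problem `(P₁)`
(mixed Dirichlet–Neumann b.c.). -/
def SolvesP1 (T L x₀ uinf : ℝ) (um uM : ℝ → ℝ) (u0 uL : ℝ)
    (f : ℝ → ℝ → ℝ) (y₀ : ℝ → ℝ) (ustar : ℝ → ℝ) (ystar : ℝ → ℝ → ℝ)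
    (ytstar : ℝ → (ℝ → ℝ) → ℝ) : Prop :=
  MemU L uinf um uM u0 uL ustar ∧
  IsWeakSol T L (MemH1uMixed L x₀ ustar) ustar (Ffun L f) y₀ ystar ytstar ∧
  ∀ (u : ℝ → ℝ) (y : ℝ → ℝ → ℝ) (yt : ℝ → (ℝ → ℝ) → ℝ),
    MemU L uinf um uM u0 uL u →
    IsWeakSol T L (MemH1uMixed L x₀ u) u (Ffun L f) y₀ y yt →
    (∫ x in Ioo 0 L, ystar T x) ≤ ∫ x in Ioo 0 L, y T x

/-- `p` is a (strong) solution of the backward dual system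
`p_t + (a p_x)_x = c` in `Q`, `p(T,⋅) = pT`, with boundary conditions / regularity
encoded through `V` (a.e. `t`, `p(t) ∈ V` and `(t ↦ p(t))` is `V`-norm continuous),
an extra regularity predicate `V₂` holding a.e. in `t`,
`(a p_x)_x ∈ L²(Q)` and `p_t = g ∈ L²(Q)`. -/
def IsDualSol (T L : ℝ) (V V2 : (ℝ → ℝ) → Prop) (a : ℝ → ℝ) (c pT : ℝ)
    (p : ℝ → ℝ → ℝ) : Prop :=
  (∀ t ∈ Icc 0 T, V (p t)) ∧
  (∀ t₀ ∈ Icc 0 T,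
    Tendsto (fun t => H1normSq L a (fun x => p t x - p t₀ x))
      (nhdsWithin t₀ (Icc 0 T)) (nhds 0)) ∧
  (∀ᵐ t ∂(volume.restrict (Ioo 0 T)), V2 (p t)) ∧
  (∀ᵐ x ∂(volume.restrict (Ioo 0 L)), p T x = pT) ∧
  IntegrableOn
    (fun t => ∫ x in Ioo 0 L, (deriv (fun s => a s * deriv (p t) s) x) ^ 2) (Ioo 0 T) ∧
  ∃ g : ℝ → ℝ → ℝ,
    (∀ t ∈ Icc 0 T, ∀ᵐ x ∂(volume.restrict (Ioo 0 L)),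
      p t x = p 0 x + ∫ s in (0:ℝ)..t, g s x) ∧
    IntegrableOn (fun t => ∫ x in Ioo 0 L, (g t x) ^ 2) (Ioo 0 T) ∧
    ∀ᵐ t ∂(volume.restrict (Ioo 0 T)), ∀ᵐ x ∂(volume.restrict (Ioo 0 L)),
      g t x + deriv (fun s => a s * deriv (p t) s) x = c

end


lemma l2_mul_integrable {μ : MeasureTheory.Measure ℝ} {f g : ℝ → ℝ}
    (hf : MeasureTheory.MemLp f 2 μ) (hg : MeasureTheory.MemLp g 2 μ) :
    MeasureTheory.Integrable (fun x => f x * g x) μ := by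
  have h : (1 : ENNReal) / 1 = 1 / 2 + 1 / 2 := by
    rw [ENNReal.div_add_div_same, one_add_one_eq_two,
      ENNReal.div_self (by norm_num) (by norm_num),
      ENNReal.div_self (by norm_num) (by norm_num)]
  have h1 := hg.smul (r := 1) hf
  have h2 := MeasureTheory.memLp_one_iff_integrable.mp h1
  exact h2

lemma ACon.mono {a b c d : ℝ} {f : ℝ → ℝ} (h : ACon a b f) (hac : a ≤ c) (hcd : c ≤ d)
    (hdb : d ≤ b) : ACon c d f := by
  constructor
  · exact h.1.mono_set (Icc_subset_Icc hac hdb)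
  · intro x hx
    have h1 := h.2 x ⟨le_trans hac hx.1, le_trans hx.2 hdb⟩
    have h2 := h.2 c ⟨hac, le_trans hcd hdb⟩
    have hii1 : IntervalIntegrable (deriv f) volume a c :=
      (intervalIntegrable_iff_integrableOn_Ioc_of_le hac).mpr
        ((h.1.mono_set Ioc_subset_Icc_self).mono_set
          (Ioc_subset_Ioc le_rfl (le_trans hcd hdb)))
    have hii2 : IntervalIntegrable (deriv f) volume c x :=
      (intervalIntegrable_iff_integrableOn_Ioc_of_le hx.1).mpr
        ((h.1.mono_set Ioc_subset_Icc_self).mono_set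
          (Ioc_subset_Ioc hac (le_trans hx.2 hdb)))
    have hadd := intervalIntegral.integral_add_adjacent_intervals hii1 hii2
    linarith


lemma fubini_primitive {a b : ℝ} {F G : ℝ → ℝ}
    (hF : IntegrableOn F (Ioc a b)) (hG : IntegrableOn G (Ioc a b)) :
    ((∫ x in Ioc a b, F x * ∫ t in Ioc a x, G t)
      + ∫ x in Ioc a b, G x * ∫ t in Ioc a x, F t)
      = (∫ x in Ioc a b, F x) * ∫ x in Ioc a b, G x := by
  set μ := volume.restrict (Ioc a b) with hμ
  have hprod : Integrable (fun p : ℝ × ℝ => F p.1 * G p.2) (μ.prod μ) := hF.mul_prod hG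
  set s : Set (ℝ × ℝ) := {p | p.2 ≤ p.1} with hsdef
  have hs : MeasurableSet s := measurableSet_le measurable_snd measurable_fst
  set K := s.indicator (fun p : ℝ × ℝ => F p.1 * G p.2) with hKdef
  set K' := sᶜ.indicator (fun p : ℝ × ℝ => F p.1 * G p.2) with hK'def
  have hK : Integrable K (μ.prod μ) := hprod.indicator hs
  have hK' : Integrable K' (μ.prod μ) := hprod.indicator hs.compl
  have hsum : (∫ p, K p ∂(μ.prod μ)) + ∫ p, K' p ∂(μ.prod μ)
      = (∫ x, F x ∂μ) * ∫ x, G x ∂μ := by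
    rw [← integral_add hK hK', ← integral_prod_mul F G]
    congr 1
    funext p
    exact congrFun (Set.indicator_self_add_compl s (fun p : ℝ × ℝ => F p.1 * G p.2)) p
  have hT1 : (∫ p, K p ∂(μ.prod μ)) = ∫ x in Ioc a b, F x * ∫ t in Ioc a x, G t := by
    rw [integral_prod _ hK]
    refine integral_congr_ae ?_
    filter_upwards [ae_restrict_mem measurableSet_Ioc] with x hx
    have hinner : (fun t => K (x, t)) = (Iic x).indicator (fun t => F x * G t) := by
      funext t
      by_cases h : t ≤ x <;>
        simp [hKdef, hsdef, Set.indicator_apply, h]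
    rw [hinner, integral_indicator measurableSet_Iic, hμ,
      Measure.restrict_restrict measurableSet_Iic]
    have : Iic x ∩ Ioc a b = Ioc a x := by
      ext t
      simp only [mem_inter_iff, mem_Iic, mem_Ioc]
      exact ⟨fun ⟨h1, h2, _⟩ => ⟨h2, h1⟩, fun ⟨h1, h2⟩ => ⟨h2, h1, h2.trans hx.2⟩⟩
    rw [this, integral_const_mul]
  have hT2 : (∫ p, K' p ∂(μ.prod μ)) = ∫ x in Ioc a b, G x * ∫ t in Ioc a x, F t := by
    rw [integral_prod_symm _ hK']
    refine integral_congr_ae ?_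
    filter_upwards [ae_restrict_mem measurableSet_Ioc] with t ht
    have hinner : (fun x => K' (x, t)) = (Iio t).indicator (fun x => F x * G t) := by
      funext x
      by_cases h : x < t <;>
        simp [hK'def, hsdef, Set.indicator_apply, h, not_le.mpr, not_lt.mpr, le_of_not_gt]
    rw [hinner, integral_indicator measurableSet_Iio, hμ,
      Measure.restrict_restrict measurableSet_Iio]
    have : Iio t ∩ Ioc a b = Ioo a t := by
      ext x
      simp only [mem_inter_iff, mem_Iio, mem_Ioc]
      exact ⟨fun ⟨h1, h2, _⟩ => ⟨h2, h1⟩, fun ⟨h1, h2⟩ => ⟨h2, h1, h2.le.trans ht.2⟩⟩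
    rw [this, ← integral_Ioc_eq_integral_Ioo]
    rw [integral_mul_const]
    ring
  rw [← hT1, ← hT2, hsum]

lemma mul_cont_integrable {a b : ℝ} {F φ : ℝ → ℝ}
    (hF : IntegrableOn F (Ioc a b)) (hφ : ContinuousOn φ (Icc a b)) :
    IntegrableOn (fun x => F x * φ x) (Ioc a b) := by
  obtain ⟨C, hC⟩ := isCompact_Icc.exists_bound_of_continuousOn hφ
  refine Integrable.mono' (hF.norm.mul_const C) ?_ ?_
  · exact hF.aestronglyMeasurable.mul
      ((hφ.mono Ioc_subset_Icc_self).aemeasurable measurableSet_Ioc).aestronglyMeasurable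
  · filter_upwards [ae_restrict_mem measurableSet_Ioc] with x hx
    calc ‖F x * φ x‖ = ‖F x‖ * ‖φ x‖ := norm_mul _ _
    _ ≤ ‖F x‖ * C := by
        refine mul_le_mul_of_nonneg_left (hC x (Ioc_subset_Icc_self hx)) (norm_nonneg _)

lemma acon_ibp {a b : ℝ} (hab : a ≤ b) {f g : ℝ → ℝ} (hf : ACon a b f) (hg : ACon a b g) :
    (∫ x in Ioc a b, (deriv f x * g x + f x * deriv g x))
      = f b * g b - f a * g a := by
  have hFi : IntegrableOn (deriv f) (Ioc a b) := hf.1.mono_set Ioc_subset_Icc_self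
  have hGi : IntegrableOn (deriv g) (Ioc a b) := hg.1.mono_set Ioc_subset_Icc_self
  have hfr : ∀ x ∈ Icc a b, f x = f a + ∫ t in Ioc a x, deriv f t := fun x hx => by
    rw [← intervalIntegral.integral_of_le hx.1]; exact hf.2 x hx
  have hgr : ∀ x ∈ Icc a b, g x = g a + ∫ t in Ioc a x, deriv g t := fun x hx => by
    rw [← intervalIntegral.integral_of_le hx.1]; exact hg.2 x hx
  have hPf : ContinuousOn (fun x => ∫ t in Ioc a x, deriv f t) (Icc a b) :=
    intervalIntegral.continuousOn_primitive hf.1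
  have hPg : ContinuousOn (fun x => ∫ t in Ioc a x, deriv g t) (Icc a b) :=
    intervalIntegral.continuousOn_primitive hg.1
  have key : (∫ x in Ioc a b, (deriv f x * g x + f x * deriv g x))
      = ∫ x in Ioc a b, (g a * deriv f x + f a * deriv g x
          + (deriv f x * (∫ t in Ioc a x, deriv g t)
            + deriv g x * (∫ t in Ioc a x, deriv f t))) := by
    refine setIntegral_congr_fun measurableSet_Ioc (fun x hx => ?_)
    rw [hfr x (Ioc_subset_Icc_self hx), hgr x (Ioc_subset_Icc_self hx)]
    ring
  have i1 : IntegrableOn (fun x => g a * deriv f x) (Ioc a b) := hFi.const_mul _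
  have i2 : IntegrableOn (fun x => f a * deriv g x) (Ioc a b) := hGi.const_mul _
  have i3 : IntegrableOn (fun x => deriv f x * (∫ t in Ioc a x, deriv g t)) (Ioc a b) :=
    mul_cont_integrable hFi hPg
  have i4 : IntegrableOn (fun x => deriv g x * (∫ t in Ioc a x, deriv f t)) (Ioc a b) :=
    mul_cont_integrable hGi hPf
  have e1 : (∫ x in Ioc a b, (g a * deriv f x + f a * deriv g x
        + ((deriv f x * ∫ t in Ioc a x, deriv g t)
          + deriv g x * ∫ t in Ioc a x, deriv f t)))
      = ((∫ x in Ioc a b, (g a * deriv f x + f a * deriv g x))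
        + ∫ x in Ioc a b, ((deriv f x * ∫ t in Ioc a x, deriv g t)
          + deriv g x * ∫ t in Ioc a x, deriv f t)) := integral_add (i1.add i2) (i3.add i4)
  have e2 : (∫ x in Ioc a b, (g a * deriv f x + f a * deriv g x))
      = (∫ x in Ioc a b, g a * deriv f x) + ∫ x in Ioc a b, f a * deriv g x :=
    integral_add i1 i2
  have e3 : (∫ x in Ioc a b, ((deriv f x * ∫ t in Ioc a x, deriv g t)
        + deriv g x * ∫ t in Ioc a x, deriv f t))
      = (∫ x in Ioc a b, (deriv f x * ∫ t in Ioc a x, deriv g t))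
        + ∫ x in Ioc a b, (deriv g x * ∫ t in Ioc a x, deriv f t) := integral_add i3 i4
  rw [key, e1, e2, e3, integral_const_mul, integral_const_mul]
  rw [fubini_primitive hFi hGi]
  have hfb : f b = f a + ∫ t in Ioc a b, deriv f t := hfr b ⟨hab, le_rfl⟩
  have hgb : g b = g a + ∫ t in Ioc a b, deriv g t := hgr b ⟨hab, le_rfl⟩
  rw [hfb, hgb]; ring


lemma blowup_right {c p q : ℝ} (hc : 0 < c) (hpq : p < q) {g : ℝ → ℝ}
    (hg : IntegrableOn g (Ioo p q)) (hlow : ∀ x ∈ Ioo p q, c / (x - p) ≤ g x) :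
    False := by
  set Z := ∫ x in Ioo p q, g x with hZ
  have hg0 : ∀ x ∈ Ioo p q, 0 ≤ g x := fun x hx =>
    le_trans (div_nonneg hc.le (by linarith [hx.1])) (hlow x hx)
  have hZ0 : 0 ≤ Z := setIntegral_nonneg measurableSet_Ioo hg0
  set ε := (q - p) * Real.exp (-(Z / c + 1)) with hε
  have hε0 : 0 < ε := mul_pos (by linarith) (Real.exp_pos _)
  have hεlt : ε < q - p := by
    have h1 : Real.exp (-(Z / c + 1)) < 1 := by
      rw [Real.exp_lt_one_iff]
      have : 0 < Z / c + 1 := by positivity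
      linarith
    calc ε < (q - p) * 1 := mul_lt_mul_of_pos_left h1 (by linarith)
      _ = q - p := mul_one _
  have hpe : p + ε < q := by linarith
  have hqe : q - p ≠ 0 := by linarith
  have hcont : ContinuousOn (fun x => c / (x - p)) (uIcc (p + ε) q) := by
    apply ContinuousOn.div continuousOn_const (by fun_prop)
    intro x hx
    rw [uIcc_of_le hpe.le] at hx
    have := hx.1
    nlinarith [hε0]
  have hii : IntervalIntegrable (fun x => c / (x - p)) volume (p + ε) q :=
    hcont.intervalIntegrable
  have hInt : IntegrableOn (fun x => c / (x - p)) (Ioc (p + ε) q) :=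
    (intervalIntegrable_iff_integrableOn_Ioc_of_le hpe.le).mp hii
  have hval : (∫ x in (p + ε)..q, c / (x - p)) = Z + c := by
    have h1 : (∫ x in (p + ε)..q, c / (x - p)) = c * ∫ x in (p + ε)..q, 1 / (x - p) := by
      rw [← intervalIntegral.integral_const_mul]
      congr 1; funext x; ring
    have h2 : (∫ x in (p + ε)..q, 1 / (x - p)) = ∫ x in ε..(q - p), 1 / x := by
      have := intervalIntegral.integral_comp_sub_right (fun x => 1 / x) p (a := p + ε) (b := q)
      simpa using this
    have h3 : (∫ x in ε..(q - p), 1 / x) = Real.log ((q - p) / ε) := by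
      apply integral_one_div
      rw [uIcc_of_le hεlt.le]
      intro h
      exact absurd h.1 (not_le.mpr hε0)
    have h4 : (q - p) / ε = Real.exp (Z / c + 1) := by
      rw [hε, Real.exp_neg, div_mul_eq_div_div, div_self hqe, one_div, inv_inv]
    rw [h1, h2, h3, h4, Real.log_exp]
    field_simp
  have hsub : Ioo (p + ε) q ⊆ Ioo p q := fun x hx => ⟨by linarith [hx.1], hx.2⟩
  have hle1 : (∫ x in Ioo (p + ε) q, c / (x - p)) ≤ ∫ x in Ioo (p + ε) q, g x :=
    setIntegral_mono_on (hInt.mono_set Ioo_subset_Ioc_self) (hg.mono_set hsub)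
      measurableSet_Ioo (fun x hx => hlow x (hsub hx))
  have hle2 : (∫ x in Ioo (p + ε) q, g x) ≤ Z := by
    refine setIntegral_mono_set hg ?_ hsub.eventuallyLE
    exact (ae_restrict_mem measurableSet_Ioo).mono hg0
  have hchain : Z + c ≤ Z := by
    calc Z + c = ∫ x in (p + ε)..q, c / (x - p) := hval.symm
      _ = ∫ x in Ioc (p + ε) q, c / (x - p) := intervalIntegral.integral_of_le hpe.le
      _ = ∫ x in Ioo (p + ε) q, c / (x - p) := integral_Ioc_eq_integral_Ioo
      _ ≤ ∫ x in Ioo (p + ε) q, g x := hle1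
      _ ≤ Z := hle2
  linarith

lemma blowup_left {c p q : ℝ} (hc : 0 < c) (hpq : p < q) {g : ℝ → ℝ}
    (hg : IntegrableOn g (Ioo p q)) (hlow : ∀ x ∈ Ioo p q, c / (q - x) ≤ g x) :
    False := by
  set Z := ∫ x in Ioo p q, g x with hZ
  have hg0 : ∀ x ∈ Ioo p q, 0 ≤ g x := fun x hx =>
    le_trans (div_nonneg hc.le (by linarith [hx.2])) (hlow x hx)
  have hZ0 : 0 ≤ Z := setIntegral_nonneg measurableSet_Ioo hg0
  set ε := (q - p) * Real.exp (-(Z / c + 1)) with hε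
  have hε0 : 0 < ε := mul_pos (by linarith) (Real.exp_pos _)
  have hεlt : ε < q - p := by
    have h1 : Real.exp (-(Z / c + 1)) < 1 := by
      rw [Real.exp_lt_one_iff]
      have : 0 < Z / c + 1 := by positivity
      linarith
    calc ε < (q - p) * 1 := mul_lt_mul_of_pos_left h1 (by linarith)
      _ = q - p := mul_one _
  have hpe : p < q - ε := by linarith
  have hqe : q - p ≠ 0 := by linarith
  have hcont : ContinuousOn (fun x => c / (q - x)) (uIcc p (q - ε)) := by
    apply ContinuousOn.div continuousOn_const (by fun_prop)
    intro x hx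
    rw [uIcc_of_le hpe.le] at hx
    have := hx.2
    nlinarith [hε0]
  have hii : IntervalIntegrable (fun x => c / (q - x)) volume p (q - ε) :=
    hcont.intervalIntegrable
  have hInt : IntegrableOn (fun x => c / (q - x)) (Ioc p (q - ε)) :=
    (intervalIntegrable_iff_integrableOn_Ioc_of_le hpe.le).mp hii
  have hval : (∫ x in p..(q - ε), c / (q - x)) = Z + c := by
    have h1 : (∫ x in p..(q - ε), c / (q - x)) = c * ∫ x in p..(q - ε), 1 / (q - x) := by
      rw [← intervalIntegral.integral_const_mul]
      congr 1; funext x; ring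
    have h2 : (∫ x in p..(q - ε), 1 / (q - x)) = ∫ x in ε..(q - p), 1 / x := by
      have := intervalIntegral.integral_comp_sub_left (fun x => 1 / x) q (a := p) (b := q - ε)
      simp only [sub_sub_cancel] at this
      rw [this, intervalIntegral.integral_symm]
    have h3 : (∫ x in ε..(q - p), 1 / x) = Real.log ((q - p) / ε) := by
      apply integral_one_div
      rw [uIcc_of_le hεlt.le]
      intro h
      exact absurd h.1 (not_le.mpr hε0)
    have h4 : (q - p) / ε = Real.exp (Z / c + 1) := by
      rw [hε, Real.exp_neg, div_mul_eq_div_div, div_self hqe, one_div, inv_inv]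
    rw [h1, h2, h3, h4, Real.log_exp]
    field_simp
  have hsub : Ioo p (q - ε) ⊆ Ioo p q := fun x hx => ⟨hx.1, by linarith [hx.2]⟩
  have hle1 : (∫ x in Ioo p (q - ε), c / (q - x)) ≤ ∫ x in Ioo p (q - ε), g x :=
    setIntegral_mono_on (hInt.mono_set Ioo_subset_Ioc_self) (hg.mono_set hsub)
      measurableSet_Ioo (fun x hx => hlow x (hsub hx))
  have hle2 : (∫ x in Ioo p (q - ε), g x) ≤ Z := by
    refine setIntegral_mono_set hg ?_ hsub.eventuallyLE
    exact (ae_restrict_mem measurableSet_Ioo).mono hg0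
  have hchain : Z + c ≤ Z := by
    calc Z + c = ∫ x in p..(q - ε), c / (q - x) := hval.symm
      _ = ∫ x in Ioc p (q - ε), c / (q - x) := intervalIntegral.integral_of_le hpe.le
      _ = ∫ x in Ioo p (q - ε), c / (q - x) := integral_Ioc_eq_integral_Ioo
      _ ≤ ∫ x in Ioo p (q - ε), g x := hle1
      _ ≤ Z := hle2
  linarith

lemma sq_integral_abs_le {p q : ℝ} (hpq : p < q) {f : ℝ → ℝ}
    (hf2 : IntegrableOn (fun x => f x ^ 2) (Ioc p q)) :
    (∫ x in Ioc p q, |f x|) ^ 2 ≤ (q - p) * ∫ x in Ioc p q, f x ^ 2 := by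
  set J := ∫ x in Ioc p q, |f x| with hJdef
  set I2 := ∫ x in Ioc p q, f x ^ 2 with hI2def
  have hJ0 : 0 ≤ J := setIntegral_nonneg measurableSet_Ioc (fun x _ => abs_nonneg _)
  have hI20 : 0 ≤ I2 := setIntegral_nonneg measurableSet_Ioc (fun x _ => sq_nonneg _)
  have hvol : (volume (Ioc p q)).toReal = q - p := by
    rw [Real.volume_Ioc, ENNReal.toReal_ofReal (by linarith)]
  have key : ∀ s : ℝ, 0 < s → 2 * J ≤ s * (q - p) + I2 / s := by
    intro s hs
    have hconst : IntegrableOn (fun _ : ℝ => s) (Ioc p q) := by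
      exact integrableOn_const (by rw [Real.volume_Ioc]; exact ENNReal.ofReal_ne_top)
    have hsum : IntegrableOn (fun x => s + f x ^ 2 / s) (Ioc p q) :=
      hconst.add (hf2.div_const s)
    have hpt : ∀ x ∈ Ioc p q, 2 * |f x| ≤ s + f x ^ 2 / s := by
      intro x _
      have h1 : 2 * |f x| * s ≤ s ^ 2 + f x ^ 2 := by
        nlinarith [sq_nonneg (s - |f x|), sq_abs (f x)]
      rw [← mul_le_mul_iff_of_pos_right hs]
      calc 2 * |f x| * s ≤ s ^ 2 + f x ^ 2 := h1
        _ = (s + f x ^ 2 / s) * s := by field_simp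
    have hmono : (∫ x in Ioc p q, 2 * |f x|) ≤ ∫ x in Ioc p q, (s + f x ^ 2 / s) := by
      refine setIntegral_mono_on ?_ hsum measurableSet_Ioc hpt
      · have hmeas : AEStronglyMeasurable (fun x => |f x|) (volume.restrict (Ioc p q)) := by
          refine (Real.continuous_sqrt.comp_aestronglyMeasurable
            hf2.aestronglyMeasurable).congr ?_
          filter_upwards with x using (Real.sqrt_sq_eq_abs (f x))
        have : IntegrableOn (fun x => |f x|) (Ioc p q) := by
          have h2 : IntegrableOn (fun x => (1 : ℝ) + f x ^ 2) (Ioc p q) := by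
            refine Integrable.add ?_ hf2
            exact integrableOn_const (by rw [Real.volume_Ioc]; exact ENNReal.ofReal_ne_top)
          refine Integrable.mono' h2 hmeas ?_
          filter_upwards with x
          rw [Real.norm_eq_abs, abs_abs]
          nlinarith [sq_nonneg (|f x| - 1), sq_abs (f x)]
        exact this.const_mul 2
    rw [integral_const_mul] at hmono
    have hrhs : (∫ x in Ioc p q, (s + f x ^ 2 / s)) = s * (q - p) + I2 / s := by
      rw [integral_add hconst (hf2.div_const s), setIntegral_const, integral_div, measureReal_def, hvol]
      rw [smul_eq_mul, mul_comm]
    rw [hrhs] at hmono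
    linarith
  by_cases hJpos : 0 < J
  · have h := key (J / (q - p)) (div_pos hJpos (by linarith))
    rw [div_mul_cancel₀ _ (by linarith : q - p ≠ 0), div_div_eq_mul_div] at h
    have h2 : J ≤ I2 * (q - p) / J := by linarith
    rw [le_div_iff₀ hJpos] at h2
    nlinarith
  · have hJ : J = 0 := le_antisymm (not_lt.mp hJpos) hJ0
    rw [hJ]
    nlinarith


lemma exists_small_right {L x₀ : ℝ} {w z : ℝ → ℝ}
    (hx : x₀ ∈ Ioo 0 L) (hw0 : w x₀ = 0) (hwAC : ACon 0 L w)
    (hA : IntegrableOn (fun x => (deriv w x) ^ 2) (Ioo 0 L))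
    (hz2 : IntegrableOn (fun x => (z x) ^ 2) (Ioo 0 L))
    {ε δ : ℝ} (hε : 0 < ε) (hδ : 0 < δ) (hδL : x₀ + δ < L) :
    ∃ b ∈ Ioo x₀ (x₀ + δ), |w b * z b| < ε := by
  by_contra hcon
  push_neg at hcon
  set A := ∫ x in Ioo 0 L, (deriv w x) ^ 2 with hAdef
  have hA0 : 0 ≤ A := setIntegral_nonneg measurableSet_Ioo (fun x _ => sq_nonneg _)
  have hwb : ∀ b ∈ Ioo x₀ (x₀ + δ), (w b) ^ 2 ≤ (b - x₀) * A := by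
    intro b hb
    have hbx : x₀ < b := hb.1
    have hbL : b < L := by linarith [hb.2]
    have hsub1 : Ioc x₀ b ⊆ Ioo 0 L := fun t ht =>
      ⟨lt_trans hx.1 ht.1, lt_of_le_of_lt ht.2 hbL⟩
    have hIw2 : IntegrableOn (fun x => (deriv w x) ^ 2) (Ioc x₀ b) := hA.mono_set hsub1
    have hii1 : IntervalIntegrable (deriv w) volume 0 x₀ :=
      (intervalIntegrable_iff_integrableOn_Ioc_of_le hx.1.le).mpr
        (hwAC.1.mono_set (fun t ht => ⟨ht.1.le, le_trans ht.2 hx.2.le⟩))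
    have hii2 : IntervalIntegrable (deriv w) volume x₀ b :=
      (intervalIntegrable_iff_integrableOn_Ioc_of_le hbx.le).mpr
        (hwAC.1.mono_set (fun t ht => ⟨le_trans hx.1.le ht.1.le, le_trans ht.2 hbL.le⟩))
    have hrep : w b = ∫ t in x₀..b, deriv w t := by
      have h1 := hwAC.2 b ⟨by linarith [hx.1], hbL.le⟩
      have h2 := hwAC.2 x₀ ⟨hx.1.le, hx.2.le⟩
      have hadd := intervalIntegral.integral_add_adjacent_intervals hii1 hii2
      rw [hw0] at h2
      linarith
    have habs : |w b| ≤ ∫ t in Ioc x₀ b, |deriv w t| := by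
      rw [hrep, ← intervalIntegral.integral_of_le hbx.le]
      exact intervalIntegral.abs_integral_le_integral_abs hbx.le
    have hJ := sq_integral_abs_le hbx hIw2
    have hI2A : (∫ x in Ioc x₀ b, (deriv w x) ^ 2) ≤ A := by
      refine setIntegral_mono_set hA ?_ hsub1.eventuallyLE
      filter_upwards with x using sq_nonneg _
    have hJ0 : 0 ≤ ∫ t in Ioc x₀ b, |deriv w t| :=
      setIntegral_nonneg measurableSet_Ioc (fun x _ => abs_nonneg _)
    nlinarith [sq_abs (w b), abs_nonneg (w b)]
  have hApos : 0 < A := by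
    rcases lt_or_eq_of_le hA0 with h | h
    · exact h
    · exfalso
      have hb0 : x₀ + δ / 2 ∈ Ioo x₀ (x₀ + δ) := ⟨by linarith, by linarith⟩
      have h1 := hwb _ hb0
      have h2 := hcon _ hb0
      rw [← h] at h1
      have : w (x₀ + δ / 2) = 0 := by nlinarith [sq_nonneg (w (x₀ + δ / 2))]
      rw [this, zero_mul, abs_zero] at h2
      linarith
  refine blowup_right (c := ε ^ 2 / A) (p := x₀) (q := x₀ + δ) (g := fun x => (z x) ^ 2)
    (by positivity) (by linarith) (hz2.mono_set ?_) ?_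
  · exact fun t ht => ⟨lt_trans hx.1 ht.1, lt_trans ht.2 (by linarith)⟩
  · intro x hxm
    have hxx : x₀ < x := hxm.1
    have hsq : ε ^ 2 ≤ (w x) ^ 2 * (z x) ^ 2 := by
      have h := hcon x hxm
      rw [abs_mul] at h
      nlinarith [abs_nonneg (w x), abs_nonneg (z x), sq_abs (w x), sq_abs (z x)]
    have hb := hwb x hxm
    rw [div_div, div_le_iff₀ (by nlinarith : (0:ℝ) < A * (x - x₀))]
    show ε ^ 2 ≤ z x ^ 2 * (A * (x - x₀))
    nlinarith [sq_nonneg (z x), mul_le_mul_of_nonneg_right hb (sq_nonneg (z x))]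

lemma exists_small_left {L x₀ : ℝ} {w z : ℝ → ℝ}
    (hx : x₀ ∈ Ioo 0 L) (hw0 : w x₀ = 0) (hwAC : ACon 0 L w)
    (hA : IntegrableOn (fun x => (deriv w x) ^ 2) (Ioo 0 L))
    (hz2 : IntegrableOn (fun x => (z x) ^ 2) (Ioo 0 L))
    {ε δ : ℝ} (hε : 0 < ε) (hδ : 0 < δ) (hδ0 : 0 < x₀ - δ) :
    ∃ b ∈ Ioo (x₀ - δ) x₀, |w b * z b| < ε := by
  by_contra hcon
  push_neg at hcon
  set A := ∫ x in Ioo 0 L, (deriv w x) ^ 2 with hAdef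
  have hA0 : 0 ≤ A := setIntegral_nonneg measurableSet_Ioo (fun x _ => sq_nonneg _)
  have hwb : ∀ b ∈ Ioo (x₀ - δ) x₀, (w b) ^ 2 ≤ (x₀ - b) * A := by
    intro b hb
    have hbx : b < x₀ := hb.2
    have hb0 : 0 < b := by linarith [hb.1]
    have hsub1 : Ioc b x₀ ⊆ Ioo 0 L := fun t ht =>
      ⟨lt_trans hb0 ht.1, lt_of_le_of_lt ht.2 hx.2⟩
    have hIw2 : IntegrableOn (fun x => (deriv w x) ^ 2) (Ioc b x₀) := hA.mono_set hsub1
    have hii1 : IntervalIntegrable (deriv w) volume 0 b :=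
      (intervalIntegrable_iff_integrableOn_Ioc_of_le hb0.le).mpr
        (hwAC.1.mono_set (fun t ht => ⟨ht.1.le, le_trans ht.2 (by linarith [hx.2])⟩))
    have hii2 : IntervalIntegrable (deriv w) volume b x₀ :=
      (intervalIntegrable_iff_integrableOn_Ioc_of_le hbx.le).mpr
        (hwAC.1.mono_set (fun t ht => ⟨le_trans hb0.le ht.1.le, le_trans ht.2 hx.2.le⟩))
    have hrep : w b = -∫ t in b..x₀, deriv w t := by
      have h1 := hwAC.2 b ⟨hb0.le, by linarith [hx.2]⟩
      have h2 := hwAC.2 x₀ ⟨hx.1.le, hx.2.le⟩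
      have hadd := intervalIntegral.integral_add_adjacent_intervals hii1 hii2
      rw [hw0] at h2
      linarith
    have habs : |w b| ≤ ∫ t in Ioc b x₀, |deriv w t| := by
      rw [hrep, abs_neg, ← intervalIntegral.integral_of_le hbx.le]
      exact intervalIntegral.abs_integral_le_integral_abs hbx.le
    have hJ := sq_integral_abs_le hbx hIw2
    have hI2A : (∫ x in Ioc b x₀, (deriv w x) ^ 2) ≤ A := by
      refine setIntegral_mono_set hA ?_ hsub1.eventuallyLE
      filter_upwards with x using sq_nonneg _
    have hJ0 : 0 ≤ ∫ t in Ioc b x₀, |deriv w t| :=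
      setIntegral_nonneg measurableSet_Ioc (fun x _ => abs_nonneg _)
    nlinarith [sq_abs (w b), abs_nonneg (w b)]
  have hApos : 0 < A := by
    rcases lt_or_eq_of_le hA0 with h | h
    · exact h
    · exfalso
      have hb0 : x₀ - δ / 2 ∈ Ioo (x₀ - δ) x₀ := ⟨by linarith, by linarith⟩
      have h1 := hwb _ hb0
      have h2 := hcon _ hb0
      rw [← h] at h1
      have : w (x₀ - δ / 2) = 0 := by nlinarith [sq_nonneg (w (x₀ - δ / 2))]
      rw [this, zero_mul, abs_zero] at h2
      linarith
  refine blowup_left (c := ε ^ 2 / A) (p := x₀ - δ) (q := x₀) (g := fun x => (z x) ^ 2)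
    (by positivity) (by linarith) (hz2.mono_set ?_) ?_
  · exact fun t ht => ⟨lt_trans hδ0 ht.1, lt_trans ht.2 hx.2⟩
  · intro x hxm
    have hxx : x < x₀ := hxm.2
    have hsq : ε ^ 2 ≤ (w x) ^ 2 * (z x) ^ 2 := by
      have h := hcon x hxm
      rw [abs_mul] at h
      nlinarith [abs_nonneg (w x), abs_nonneg (z x), sq_abs (w x), sq_abs (z x)]
    have hb := hwb x hxm
    rw [div_div, div_le_iff₀ (by nlinarith : (0:ℝ) < A * (x₀ - x))]
    show ε ^ 2 ≤ z x ^ 2 * (A * (x₀ - x))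
    nlinarith [sq_nonneg (z x), mul_le_mul_of_nonneg_right hb (sq_nonneg (z x))]

/-- Lemma 2.2: integration by parts for the strongly degenerate
operator: for `(y,z) ∈ H_u^2(0,L) × H_u^1(0,L)`,
`∫_0^L (u y_x)_x z dx = − ∫_0^L u y_x z_x dx`. -/
theorem degenerate_integration_by_parts
    (L x₀ : ℝ) (hL : 0 < L) (u y z : ℝ → ℝ)
    (hu : StrongDeg L x₀ u)
    (hy : MemH2u L x₀ u y) (hz : MemH1u L x₀ u z) :
    (∫ x in Ioo 0 L, deriv (fun s => u s * deriv y s) x * z x)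
      = - ∫ x in Ioo 0 L, u x * deriv y x * deriv z x := by
  set w := fun s => u s * deriv y s with hwdef
  have hx : x₀ ∈ Ioo 0 L := hu.mem
  have hw0 : w x₀ = 0 := by simp [hwdef, hu.zero]
  have hwAC : ACon 0 L w := hy.2.2.2
  have hw'L2 : MemLp (deriv w) 2 (volume.restrict (Ioo 0 L)) := hy.2.2.1
  have hzL2 : MemLp z 2 (volume.restrict (Ioo 0 L)) := hz.1
  have h1 : IntegrableOn (fun x => deriv w x * z x) (Ioo 0 L) :=
    l2_mul_integrable hw'L2 hzL2
  have hsuy : MemLp (fun x => Real.sqrt (u x) * deriv y x) 2 (volume.restrict (Ioo 0 L)) :=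
    hy.1.2.2.1
  have hsuz : MemLp (fun x => Real.sqrt (u x) * deriv z x) 2 (volume.restrict (Ioo 0 L)) :=
    hz.2.2.1
  have hprod : IntegrableOn
      (fun x => (Real.sqrt (u x) * deriv y x) * (Real.sqrt (u x) * deriv z x)) (Ioo 0 L) :=
    l2_mul_integrable hsuy hsuz
  have hupos : ∀ x ∈ Ioo 0 L, 0 ≤ u x := by
    intro x hxm
    by_cases hxe : x = x₀
    · rw [hxe, hu.zero]
    · exact (hu.pos x ⟨hxm.1.le, hxm.2.le⟩ hxe).le
  have heq : ∀ x ∈ Ioo 0 L,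
      (Real.sqrt (u x) * deriv y x) * (Real.sqrt (u x) * deriv z x) = w x * deriv z x := by
    intro x hxm
    have h0 := hupos x hxm
    simp only [hwdef]
    rw [show (Real.sqrt (u x) * deriv y x) * (Real.sqrt (u x) * deriv z x)
        = (Real.sqrt (u x) * Real.sqrt (u x)) * (deriv y x * deriv z x) by ring,
      Real.mul_self_sqrt h0]
    ring
  have h2 : IntegrableOn (fun x => w x * deriv z x) (Ioo 0 L) := by
    refine hprod.congr ?_
    filter_upwards [ae_restrict_mem measurableSet_Ioo] with x hxm using heq x hxm
  have hh : IntegrableOn (fun x => deriv w x * z x + w x * deriv z x) (Ioo 0 L) := h1.add h2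
  have hA : IntegrableOn (fun x => (deriv w x) ^ 2) (Ioo 0 L) := by
    refine (l2_mul_integrable hw'L2 hw'L2).congr ?_
    filter_upwards with x
    rw [pow_two]
  have hz2 : IntegrableOn (fun x => (z x) ^ 2) (Ioo 0 L) := by
    refine (l2_mul_integrable hzL2 hzL2).congr ?_
    filter_upwards with x
    rw [pow_two]
  have hz0 : z 0 = 0 := hz.2.2.2.1
  have hzL : z L = 0 := hz.2.2.2.2
  suffices hzero : (∫ x in Ioo 0 L, (deriv w x * z x + w x * deriv z x)) = 0 by
    rw [integral_add h1 h2] at hzero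
    have heq2 : (∫ x in Ioo 0 L, w x * deriv z x)
        = ∫ x in Ioo 0 L, u x * deriv y x * deriv z x := by
      simp only [hwdef]
    rw [heq2] at hzero
    linarith
  have habs : IntegrableOn (fun x => |deriv w x * z x + w x * deriv z x|) (Icc 0 L) := by
    rw [integrableOn_Icc_iff_integrableOn_Ioo]
    exact hh.abs
  set Φ := fun r => ∫ t in Ioc 0 r, |deriv w t * z t + w t * deriv z t| with hΦdef
  have hΦc : ContinuousOn Φ (Icc 0 L) := intervalIntegral.continuousOn_primitive habs
  have hΦx₀ : ContinuousWithinAt Φ (Icc 0 L) x₀ := hΦc x₀ ⟨hx.1.le, hx.2.le⟩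
  have hhIoc : IntegrableOn (fun x => deriv w x * z x + w x * deriv z x) (Ioc 0 L) := by
    rw [integrableOn_Ioc_iff_integrableOn_Ioo]
    exact hh
  have habsIoc : IntegrableOn (fun x => |deriv w x * z x + w x * deriv z x|) (Ioc 0 L) :=
    habs.mono_set Ioc_subset_Icc_self
  have key : ∀ ε > 0, |∫ x in Ioo 0 L, (deriv w x * z x + w x * deriv z x)| < ε := by
    intro ε hεp
    obtain ⟨δ₁, hδ₁p, hδ₁⟩ := Metric.continuousWithinAt_iff.mp hΦx₀ (ε / 8) (by linarith)
    set δ₂ := min (min (δ₁ / 2) (x₀ / 2)) ((L - x₀) / 2) with hδ₂def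
    have hδ₂p : 0 < δ₂ := by
      refine lt_min (lt_min (by linarith) (by linarith [hx.1])) (by linarith [hx.2])
    have hδ₂a : δ₂ ≤ δ₁ / 2 := le_trans (min_le_left _ _) (min_le_left _ _)
    have hδ₂b : δ₂ ≤ x₀ / 2 := le_trans (min_le_left _ _) (min_le_right _ _)
    have hδ₂c : δ₂ ≤ (L - x₀) / 2 := min_le_right _ _
    obtain ⟨b, hbmem, hbsmall⟩ := exists_small_right hx hw0 hwAC hA hz2
      (ε := ε / 4) (δ := δ₂) (by linarith) hδ₂p (by linarith)
    obtain ⟨a, hamem, hasmall⟩ := exists_small_left hx hw0 hwAC hA hz2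
      (ε := ε / 4) (δ := δ₂) (by linarith) hδ₂p (by linarith)
    have ha0 : 0 < a := by
      have := hamem.1; linarith
    have hax : a < x₀ := hamem.2
    have hxb : x₀ < b := hbmem.1
    have hbL : b < L := by
      have := hbmem.2; linarith
    have hab : a < b := lt_trans hax hxb
    have haL : a ≤ L := by linarith
    -- IBP on the two outer intervals
    have hACza : ACon 0 a z := by
      refine hz.2.1 0 a ha0.le (fun t ht => ⟨⟨ht.1, le_trans ht.2 haL⟩, ?_⟩)
      simp only [mem_singleton_iff]
      intro hte
      rw [hte] at ht
      linarith [ht.2]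
    have hACzb : ACon b L z := by
      refine hz.2.1 b L hbL.le (fun t ht => ⟨⟨le_trans (by linarith [hx.1]) ht.1, ht.2⟩, ?_⟩)
      simp only [mem_singleton_iff]
      intro hte
      rw [hte] at ht
      linarith [ht.1]
    have hACwa : ACon 0 a w := hwAC.mono le_rfl ha0.le haL
    have hACwb : ACon b L w := hwAC.mono (by linarith [hx.1] : (0:ℝ) ≤ b) hbL.le le_rfl
    have hibp1 := acon_ibp ha0.le hACwa hACza
    have hibp2 := acon_ibp hbL.le hACwb hACzb
    rw [hz0, mul_zero] at hibp1
    rw [hzL, mul_zero] at hibp2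
    -- split the full integral
    have hint1 : IntegrableOn (fun x => deriv w x * z x + w x * deriv z x) (Ioc 0 a) :=
      hhIoc.mono_set (Ioc_subset_Ioc le_rfl haL)
    have hint2 : IntegrableOn (fun x => deriv w x * z x + w x * deriv z x) (Ioc a b) :=
      hhIoc.mono_set (Ioc_subset_Ioc ha0.le hbL.le)
    have hint3 : IntegrableOn (fun x => deriv w x * z x + w x * deriv z x) (Ioc b L) :=
      hhIoc.mono_set (Ioc_subset_Ioc (by linarith [hx.1]) le_rfl)
    have hsplit : (∫ x in Ioo 0 L, (deriv w x * z x + w x * deriv z x))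
        = (∫ x in Ioc 0 a, (deriv w x * z x + w x * deriv z x))
          + (∫ x in Ioc a b, (deriv w x * z x + w x * deriv z x))
          + ∫ x in Ioc b L, (deriv w x * z x + w x * deriv z x) := by
      rw [← integral_Ioc_eq_integral_Ioo,
        ← Ioc_union_Ioc_eq_Ioc (by linarith [hx.1] : (0:ℝ) ≤ b) hbL.le,
        setIntegral_union (Ioc_disjoint_Ioc_of_le le_rfl) measurableSet_Ioc
          (hint1.union hint2 |>.mono_set (by rw [Ioc_union_Ioc_eq_Ioc ha0.le hab.le]))
          hint3,
        ← Ioc_union_Ioc_eq_Ioc ha0.le hab.le,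
        setIntegral_union (Ioc_disjoint_Ioc_of_le le_rfl) measurableSet_Ioc hint1 hint2]
    -- middle piece bound
    have hmidint1 : IntegrableOn (fun x => |deriv w x * z x + w x * deriv z x|) (Ioc 0 a) :=
      habsIoc.mono_set (Ioc_subset_Ioc le_rfl haL)
    have hmidint2 : IntegrableOn (fun x => |deriv w x * z x + w x * deriv z x|) (Ioc a b) :=
      habsIoc.mono_set (Ioc_subset_Ioc ha0.le hbL.le)
    have hΦsplit : Φ b = Φ a + ∫ x in Ioc a b, |deriv w x * z x + w x * deriv z x| := by
      simp only [hΦdef]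
      rw [← Ioc_union_Ioc_eq_Ioc ha0.le hab.le,
        setIntegral_union (Ioc_disjoint_Ioc_of_le le_rfl) measurableSet_Ioc hmidint1 hmidint2]
    have hmid : |∫ x in Ioc a b, (deriv w x * z x + w x * deriv z x)| ≤ Φ b - Φ a := by
      rw [hΦsplit]
      ring_nf
      calc |∫ x in Ioc a b, (deriv w x * z x + w x * deriv z x)|
          ≤ ∫ x in Ioc a b, |deriv w x * z x + w x * deriv z x| := by
            simpa [Real.norm_eq_abs] using
              norm_integral_le_integral_norm
                (μ := volume.restrict (Ioc a b))
                (fun x => deriv w x * z x + w x * deriv z x)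
        _ = _ := by ring
    have hamem2 : a ∈ Icc 0 L := ⟨ha0.le, haL⟩
    have hbmem2 : b ∈ Icc 0 L := ⟨by linarith [hx.1], hbL.le⟩
    have hda : dist a x₀ < δ₁ := by
      rw [Real.dist_eq, abs_lt]
      constructor <;> [linarith [hamem.1]; linarith]
    have hdb : dist b x₀ < δ₁ := by
      rw [Real.dist_eq, abs_lt]
      constructor <;> [linarith; linarith [hbmem.2]]
    have hΦa := hδ₁ hamem2 hda
    have hΦb := hδ₁ hbmem2 hdb
    rw [Real.dist_eq] at hΦa hΦb
    have hΦab : Φ b - Φ a < ε / 4 := by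
      have h1 := abs_lt.mp hΦa
      have h2 := abs_lt.mp hΦb
      linarith
    rw [hsplit, hibp1, hibp2]
    calc |w a * z a - 0 + (∫ x in Ioc a b, (deriv w x * z x + w x * deriv z x))
          + (0 - w b * z b)|
        ≤ |w a * z a| + |∫ x in Ioc a b, (deriv w x * z x + w x * deriv z x)| + |w b * z b| := by
          have t1 := abs_add_le (w a * z a - 0 + ∫ x in Ioc a b,
            (deriv w x * z x + w x * deriv z x)) (0 - w b * z b)
          have t2 := abs_add_le (w a * z a - 0)
            (∫ x in Ioc a b, (deriv w x * z x + w x * deriv z x))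
          simp only [sub_zero, zero_sub, abs_neg] at t1 t2 ⊢
          linarith
      _ < ε / 4 + (ε / 4) + ε / 4 := by
          refine add_lt_add (add_lt_add hasmall (lt_of_le_of_lt hmid hΦab)) hbsmall
      _ < ε := by linarith
  by_contra hne
  exact lt_irrefl _ (key _ (abs_pos.mpr hne))
end

section
/- Let L > 0, u_∞ ≥ 0, u₀, u_L ∈ ℝ, and u_M ∈ W^{1,∞}(0,L) with ‖u_M'‖_{L^∞(0,L)} ≤ u_∞, u₀ ≤ u_M(0), u_L ≤ u_M(L). Define u*(x) = u₀ + u_∞ x on [0,x₁), u*(x) = u_M(x) on [x₁,x₂), u*(x) = −u_∞(x−L) + u_L on [x₂,L], where x₁ ≤ x₂ solve u_M(x₁) = u_∞ x₁ + u₀ and u_M(x₂) = −u_∞(x₂−L) + u_L. Then for every z ∈ W^{1,∞}(0,L) with |z'(x)| ≤ u_∞ a.e. on (0,L), z(0) ≤ u₀, z(L) ≤ u_L, and z(x) ≤ u_M(x) for all x ∈ [0,L], one has z(x) ≤ u*(x) for all x ∈ [0,L]; that is, u* is the maximal element of this constraint set, and belongs to it. -/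
open MeasureTheory Set Filter

/-- the piecewise function `u*` (`u₀ + u_∞ x` on `[0,x₁)`, `u_M` on
`[x₁,x₂)`, `−u_∞(x−L)+u_L` on `[x₂,L]`) is the maximal element of the constraint set
`{z ∈ W^{1,∞}(0,L) : |z'| ≤ u_∞ a.e., z(0) ≤ u₀, z(L) ≤ u_L, z ≤ u_M on [0,L]}`,
and it belongs to this set. -/
theorem piecewise_maximal_element
    (L uinf u0 uL : ℝ) (uM : ℝ → ℝ)
    (hL : 0 < L) (hinf : 0 ≤ uinf)
    (huM : LipschitzOnWith (Real.toNNReal uinf) uM (Icc 0 L))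
    (hu0 : u0 ≤ uM 0) (huL : uL ≤ uM L)
    (x₁ x₂ : ℝ) (hx₁ : x₁ ∈ Icc 0 L) (hx₂ : x₂ ∈ Icc 0 L) (hx12 : x₁ ≤ x₂)
    (heq1 : uM x₁ = uinf * x₁ + u0) (heq2 : uM x₂ = -uinf * (x₂ - L) + uL)
    (ustar : ℝ → ℝ)
    (hustar : ∀ x : ℝ, ustar x =
      if x < x₁ then u0 + uinf * x
      else if x < x₂ then uM x
      else -uinf * (x - L) + uL) :
    (LipschitzOnWith (Real.toNNReal uinf) ustar (Icc 0 L) ∧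
      ustar 0 ≤ u0 ∧ ustar L ≤ uL ∧ ∀ x ∈ Icc 0 L, ustar x ≤ uM x) ∧
    ∀ z : ℝ → ℝ,
      LipschitzOnWith (Real.toNNReal uinf) z (Icc 0 L) →
      z 0 ≤ u0 → z L ≤ uL → (∀ x ∈ Icc 0 L, z x ≤ uM x) →
      ∀ x ∈ Icc 0 L, z x ≤ ustar x := by
  have hco : (Real.toNNReal uinf : ℝ) = uinf := Real.coe_toNNReal _ hinf
  have hMlip : ∀ a ∈ Icc 0 L, ∀ b ∈ Icc 0 L, |uM a - uM b| ≤ uinf * |a - b| := by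
    intro a ha b hb
    have h := huM.dist_le_mul a ha b hb
    rwa [Real.dist_eq, Real.dist_eq, hco] at h
  have hA : ∀ x : ℝ, x ≤ x₁ → ustar x = u0 + uinf * x := by
    intro x hx
    rcases lt_or_eq_of_le hx with h | h
    · rw [hustar, if_pos h]
    · subst h
      rw [hustar, if_neg (lt_irrefl x)]
      rcases lt_or_ge x x₂ with h2 | h2
      · rw [if_pos h2, heq1]; ring
      · have hx2 : x = x₂ := le_antisymm hx12 h2
        rw [if_neg (not_lt.2 h2)]
        have := heq2
        rw [← hx2] at this
        rw [← this, heq1]; ring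
  have hB : ∀ x : ℝ, x₁ ≤ x → x ≤ x₂ → ustar x = uM x := by
    intro x h1 h2
    rw [hustar, if_neg (not_lt.2 h1)]
    rcases lt_or_eq_of_le h2 with h | h
    · rw [if_pos h]
    · subst h
      rw [if_neg (lt_irrefl x), heq2]
  have hC : ∀ x : ℝ, x₂ ≤ x → ustar x = -uinf * (x - L) + uL := by
    intro x h2
    rw [hustar, if_neg (not_lt.2 (le_trans hx12 h2)), if_neg (not_lt.2 h2)]
  have key : ∀ x ∈ Icc 0 L, ∀ y ∈ Icc 0 L, x ≤ y →
      |ustar y - ustar x| ≤ uinf * (y - x) := by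
    intro x hx y hy hxy
    rcases le_or_gt y x₁ with h1 | h1
    · rw [hA x (le_trans hxy h1), hA y h1]
      have e : u0 + uinf * y - (u0 + uinf * x) = uinf * (y - x) := by ring
      rw [e, abs_of_nonneg (mul_nonneg hinf (by linarith))]
    · rcases le_or_gt x₂ x with h2 | h2
      · rw [hC x h2, hC y (le_trans h2 hxy)]
        have e : -uinf * (y - L) + uL - (-uinf * (x - L) + uL) = -(uinf * (y - x)) := by
          ring
        rw [e, abs_neg, abs_of_nonneg (mul_nonneg hinf (by linarith))]
      · rcases le_or_gt x x₁ with h3 | h3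
        · have e1 : ustar x = u0 + uinf * x := hA x h3
          have e3 : |uM x₁ - ustar x| = uinf * (x₁ - x) := by
            rw [e1, heq1]
            have e : uinf * x₁ + u0 - (u0 + uinf * x) = uinf * (x₁ - x) := by ring
            rw [e, abs_of_nonneg (mul_nonneg hinf (by linarith))]
          rcases le_or_gt y x₂ with h4 | h4
          · have e2 : ustar y = uM y := hB y h1.le h4
            have hb : |uM y - uM x₁| ≤ uinf * (y - x₁) := by
              have h := hMlip y hy x₁ hx₁
              rwa [abs_of_nonneg (by linarith : (0:ℝ) ≤ y - x₁)] at h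
            calc |ustar y - ustar x| ≤ |ustar y - uM x₁| + |uM x₁ - ustar x| :=
                  abs_sub_le _ _ _
              _ ≤ uinf * (y - x₁) + uinf * (x₁ - x) := by rw [e2, e3]; linarith
              _ = uinf * (y - x) := by ring
          · -- x ≤ x₁ ≤ x₂ < y : via x₁ and x₂
            have e2 : ustar y = -uinf * (y - L) + uL := hC y h4.le
            have eb : ustar x₂ = uM x₂ := hB x₂ hx12 le_rfl
            have h5 : |ustar y - uM x₂| = uinf * (y - x₂) := by
              rw [e2, heq2]
              have e : -uinf * (y - L) + uL - (-uinf * (x₂ - L) + uL)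
                  = -(uinf * (y - x₂)) := by ring
              rw [e, abs_neg, abs_of_nonneg (mul_nonneg hinf (by linarith))]
            have h6 : |uM x₂ - uM x₁| ≤ uinf * (x₂ - x₁) := by
              have h := hMlip x₂ hx₂ x₁ hx₁
              rwa [abs_of_nonneg (by linarith : (0:ℝ) ≤ x₂ - x₁)] at h
            calc |ustar y - ustar x|
                ≤ |ustar y - uM x₂| + |uM x₂ - ustar x| := abs_sub_le _ _ _
              _ ≤ |ustar y - uM x₂| + (|uM x₂ - uM x₁| + |uM x₁ - ustar x|) := by
                  linarith [abs_sub_le (uM x₂) (uM x₁) (ustar x)]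
              _ ≤ uinf * (y - x₂) + (uinf * (x₂ - x₁) + uinf * (x₁ - x)) := by
                  rw [h5, e3]; linarith
              _ = uinf * (y - x) := by ring
        · -- x₁ < x < x₂
          rcases le_or_gt y x₂ with h4 | h4
          · rw [hB x h3.le h2.le, hB y h1.le h4]
            have h := hMlip y hy x hx
            rwa [abs_of_nonneg (by linarith : (0:ℝ) ≤ y - x)] at h
          · have e2 : ustar y = -uinf * (y - L) + uL := hC y h4.le
            have h5 : |ustar y - uM x₂| = uinf * (y - x₂) := by
              rw [e2, heq2]
              have e : -uinf * (y - L) + uL - (-uinf * (x₂ - L) + uL)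
                  = -(uinf * (y - x₂)) := by ring
              rw [e, abs_neg, abs_of_nonneg (mul_nonneg hinf (by linarith))]
            have h6 : |uM x₂ - ustar x| ≤ uinf * (x₂ - x) := by
              rw [hB x h3.le h2.le]
              have h := hMlip x₂ hx₂ x hx
              rwa [abs_of_nonneg (by linarith : (0:ℝ) ≤ x₂ - x)] at h
            calc |ustar y - ustar x|
                ≤ |ustar y - uM x₂| + |uM x₂ - ustar x| := abs_sub_le _ _ _
              _ ≤ uinf * (y - x₂) + uinf * (x₂ - x) := by rw [h5]; linarith
              _ = uinf * (y - x) := by ring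
  constructor
  · refine ⟨?_, ?_, ?_, ?_⟩
    · rw [lipschitzOnWith_iff_dist_le_mul]
      intro x hx y hy
      rw [Real.dist_eq, Real.dist_eq, hco]
      rcases le_total x y with h | h
      · have hk := key x hx y hy h
        rw [abs_sub_comm]
        calc |ustar y - ustar x| ≤ uinf * (y - x) := hk
          _ = uinf * |x - y| := by
              rw [abs_sub_comm, abs_of_nonneg (by linarith : (0:ℝ) ≤ y - x)]
      · have hk := key y hy x hx h
        calc |ustar x - ustar y| ≤ uinf * (x - y) := hk
          _ = uinf * |x - y| := by
              rw [abs_of_nonneg (by linarith : (0:ℝ) ≤ x - y)]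
    · have := hA 0 hx₁.1
      rw [this]; simp
    · have := hC L hx₂.2
      rw [this]; simp
    · intro x hx
      rcases le_or_gt x x₁ with h1 | h1
      · rw [hA x h1]
        have h := hMlip x₁ hx₁ x hx
        rw [abs_of_nonneg (by linarith : (0:ℝ) ≤ x₁ - x)] at h
        have h' := (abs_le.1 h).2
        rw [heq1] at h'; linarith
      · rcases le_or_gt x x₂ with h2 | h2
        · rw [hB x h1.le h2]
        · rw [hC x h2.le]
          have h := hMlip x₂ hx₂ x hx
          have harg : |x₂ - x| = x - x₂ := by
            rw [abs_sub_comm, abs_of_nonneg (by linarith : (0:ℝ) ≤ x - x₂)]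
          rw [harg] at h
          have h' := (abs_le.1 h).2
          rw [heq2] at h'; linarith
  · intro z hz hz0 hzL hzM x hx
    rw [lipschitzOnWith_iff_dist_le_mul] at hz
    rw [hustar]
    split_ifs with h1 h2
    · have h := hz x hx 0 ⟨le_rfl, hL.le⟩
      rw [Real.dist_eq, Real.dist_eq, hco, sub_zero, abs_of_nonneg hx.1] at h
      have := (abs_le.1 h).2
      linarith
    · exact hzM x hx
    · have h := hz x hx L ⟨hL.le, le_rfl⟩
      rw [Real.dist_eq, Real.dist_eq, hco] at h
      have harg : |x - L| = L - x := by
        rw [abs_sub_comm, abs_of_nonneg (by linarith [hx.2] : (0:ℝ) ≤ L - x)]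
      rw [harg] at h
      have := (abs_le.1 h).2
      linarith
end
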